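/- Let φ : G → G' be a half-isomorphism of groups. If x, y ∈ G commute (xy = yx), then φ(x) and φ(y) commute: φ(x)φ(y) = φ(y)φ(x). -/
import Mathlib

private theorem key_half {G G' : Type*} [Group G] [Group G'] (φ : G → G')
    (hhalf : ∀ x y : G, φ (x * y) = φ x * φ y ∨ φ (x * y) = φ y * φ x)
    (x y : G) (hc : x * y = y * x) (h1 : φ (x * y) = φ x * φ y) :
    φ x * φ y = φ y * φ x := by
  have hy2 : φ (y * y) = φ y * φ y := by rcases hhalf y y with h | h <;> rw [h]
  have e1 : x * (y * y) = (x * y) * y := by group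
  have hxy2 : φ (x * (y * y)) = φ x * (φ y * φ y) ∨ φ x * φ y = φ y * φ x := by
    rcases hhalf (x * y) y with h | h
    · left; rw [e1, h, h1, mul_assoc]
    · rcases hhalf x (y * y) with h' | h'
      · left; rw [h', hy2]
      · right
        have t1 : φ y * (φ x * φ y) = φ (x * (y * y)) := by rw [e1, h, h1]
        have t2 : φ (x * (y * y)) = φ y * (φ y * φ x) := by
          rw [h', hy2, mul_assoc]
        exact mul_left_cancel (t1.trans t2)
  rcases hxy2 with hv | hd
  · have e2 : (x * y) * (x * y) = x * (x * (y * y)) := by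
      calc (x * y) * (x * y) = x * ((y * x) * y) := by group
        _ = x * ((x * y) * y) := by rw [← hc]
        _ = x * (x * (y * y)) := by group
    have hsq : φ (x * (x * (y * y))) = (φ x * φ y) * (φ x * φ y) := by
      rw [← e2]
      rcases hhalf (x * y) (x * y) with h | h <;> rw [h, h1]
    rcases hhalf x (x * (y * y)) with h | h
    · have t : φ x * (φ y * (φ x * φ y)) = φ x * (φ x * (φ y * φ y)) := by
        rw [← mul_assoc, ← hsq, h, hv]
      have t2 := mul_left_cancel t
      have t3 : (φ y * φ x) * φ y = (φ x * φ y) * φ y := by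
        rw [mul_assoc, t2, mul_assoc]
      exact (mul_right_cancel t3).symm
    · have t : φ x * (φ y * (φ x * φ y)) = φ x * (φ y * (φ y * φ x)) := by
        rw [← mul_assoc, ← hsq, h, hv, mul_assoc, mul_assoc]
      exact mul_left_cancel (mul_left_cancel t)
  · exact hd

theorem stmt_1 {G G' : Type*} [Group G] [Group G'] (φ : G → G')
    (hbij : Function.Bijective φ)
    (hhalf : ∀ x y : G, φ (x * y) = φ x * φ y ∨ φ (x * y) = φ y * φ x)
    (x y : G) (hc : x * y = y * x) :
    φ x * φ y = φ y * φ x := by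
  rcases hhalf x y with h | h
  · exact key_half φ hhalf x y hc h
  · have h' : φ (y * x) = φ y * φ x := by rw [← hc]; exact h
    exact (key_half φ hhalf y x hc.symm h').symm
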